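/- arXiv:1606.02100 — 2 statements merged into one kernel-verified Lean document; each statement's English description precedes it below -/
import Mathlib

section
/- Let ρ₀, ρ₁ > 0 and u₀, u₁ be real numbers with ρ₀ ≠ ρ₁. Define κ₁(v) = v(ρ₁ - ρ₀) - (ρ₁u₁ - ρ₀u₀) and κ₂(v) = v(ρ₁u₁ - ρ₀u₀) - (ρ₁u₁² - ρ₀u₀²). Then the equation v·κ₁(v) = κ₂(v) has exactly the two solutions v = (u₁√ρ₁ + u₀√ρ₀)/(√ρ₁ + √ρ₀) and v = (u₁√ρ₁ - u₀√ρ₀)/(√ρ₁ - √ρ₀). -/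
theorem shock_speed_roots (ρ₀ ρ₁ u₀ u₁ : ℝ) (hρ₀ : 0 < ρ₀) (hρ₁ : 0 < ρ₁)
    (hne : ρ₀ ≠ ρ₁)
    (κ₁ κ₂ : ℝ → ℝ)
    (hκ₁ : ∀ v, κ₁ v = v * (ρ₁ - ρ₀) - (ρ₁ * u₁ - ρ₀ * u₀))
    (hκ₂ : ∀ v, κ₂ v = v * (ρ₁ * u₁ - ρ₀ * u₀) - (ρ₁ * u₁ ^ 2 - ρ₀ * u₀ ^ 2)) :
    ∀ v : ℝ, v * κ₁ v = κ₂ v ↔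
      v = (u₁ * Real.sqrt ρ₁ + u₀ * Real.sqrt ρ₀) / (Real.sqrt ρ₁ + Real.sqrt ρ₀) ∨
      v = (u₁ * Real.sqrt ρ₁ - u₀ * Real.sqrt ρ₀) / (Real.sqrt ρ₁ - Real.sqrt ρ₀) := by
  intro v
  set a := Real.sqrt ρ₀ with ha
  set b := Real.sqrt ρ₁ with hb
  have ha0 : 0 < a := Real.sqrt_pos.mpr hρ₀
  have hb0 : 0 < b := Real.sqrt_pos.mpr hρ₁
  have ha2 : a * a = ρ₀ := Real.mul_self_sqrt hρ₀.le
  have hb2 : b * b = ρ₁ := Real.mul_self_sqrt hρ₁.le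
  have hab : a ≠ b := fun h => hne (by rw [← ha2, ← hb2, h])
  have hsum : b + a ≠ 0 := by positivity
  have hdiff : b - a ≠ 0 := sub_ne_zero.mpr (Ne.symm hab)
  have key : v * κ₁ v - κ₂ v =
      ((b - a) * (b + a)) * (v - (u₁ * b + u₀ * a) / (b + a)) *
        (v - (u₁ * b - u₀ * a) / (b - a)) := by
    rw [hκ₁, hκ₂, ← ha2, ← hb2]
    field_simp
    ring
  constructor
  · intro h
    have h0 : ((b - a) * (b + a)) * (v - (u₁ * b + u₀ * a) / (b + a)) *
        (v - (u₁ * b - u₀ * a) / (b - a)) = 0 := by rw [← key]; linarith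
    rcases mul_eq_zero.mp h0 with h1 | h1
    · rcases mul_eq_zero.mp h1 with h2 | h2
      · exact absurd h2 (mul_ne_zero hdiff hsum)
      · exact Or.inl (by linarith [sub_eq_zero.mp h2])
    · exact Or.inr (by linarith [sub_eq_zero.mp h1])
  · rintro (h | h) <;>
    · have : v * κ₁ v - κ₂ v = 0 := by rw [key, h]; field_simp; ring
      linarith
end

section
/- For all real numbers u₀ ≠ u₁ and ρ₀ > 0, ρ₁ > 0 with ρ₀ ≠ ρ₁, the quantity v₂ = (u₁√ρ₁ - u₀√ρ₀)/(√ρ₁ - √ρ₀) does not lie in the closed interval [min{u₀, u₁}, max{u₀, u₁}]. -/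
theorem second_root_not_overcompressive (ρ₀ ρ₁ u₀ u₁ : ℝ) (hρ₀ : 0 < ρ₀) (hρ₁ : 0 < ρ₁)
    (hρ : ρ₀ ≠ ρ₁) (hu : u₀ ≠ u₁) :
    (u₁ * Real.sqrt ρ₁ - u₀ * Real.sqrt ρ₀) / (Real.sqrt ρ₁ - Real.sqrt ρ₀) ∉
      Set.Icc (min u₀ u₁) (max u₀ u₁) := by
  set a := Real.sqrt ρ₀ with ha'
  set b := Real.sqrt ρ₁ with hb'
  have ha : 0 < a := Real.sqrt_pos.mpr hρ₀
  have hb : 0 < b := Real.sqrt_pos.mpr hρ₁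
  have hab : a ≠ b := fun h => hρ (by
    have := congrArg (fun x => x ^ 2) h
    simpa [ha', hb', Real.sq_sqrt hρ₀.le, Real.sq_sqrt hρ₁.le] using this)
  have hd : b - a ≠ 0 := sub_ne_zero.mpr (Ne.symm hab)
  intro hmem
  set v := (u₁ * b - u₀ * a) / (b - a) with hv
  have hv0 : v - u₀ = b * (u₁ - u₀) / (b - a) := by
    rw [eq_div_iff hd, sub_mul, hv, div_mul_cancel₀ _ hd]; ring
  have hv1 : v - u₁ = a * (u₁ - u₀) / (b - a) := by
    rw [eq_div_iff hd, sub_mul, hv, div_mul_cancel₀ _ hd]; ring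
  have hprod : (v - u₀) * (v - u₁) = a * b * (u₁ - u₀) ^ 2 / (b - a) ^ 2 := by
    rw [hv0, hv1]; field_simp
  have hpos : 0 < (v - u₀) * (v - u₁) := by
    rw [hprod]
    have hu' : u₁ - u₀ ≠ 0 := sub_ne_zero.mpr (Ne.symm hu)
    positivity
  have hnp : (v - u₀) * (v - u₁) ≤ 0 := by
    obtain ⟨h1, h2⟩ := hmem
    rcases le_total u₀ u₁ with h | h
    · rw [min_eq_left h] at h1; rw [max_eq_right h] at h2
      exact mul_nonpos_of_nonneg_of_nonpos (by linarith) (by linarith)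
    · rw [min_eq_right h] at h1; rw [max_eq_left h] at h2
      exact mul_nonpos_of_nonpos_of_nonneg (by linarith) (by linarith)
  linarith
end
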